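/- Let (Ω, Σ, μ) be a finite measure space, X a Banach space, and let f : Ω → X belong to L̄₁(Ω, Σ, μ, X). Then there exists a partition Π of Ω such that for every finer partition Γ ≻ Π and every choice of sampling points T for Γ, the RL integral sum S(f, Γ, T) converges absolutely. -/

import Mathlib

open MeasureTheory Set Pointwise

/-- A countable partition of `A` into pairwise disjoint measurable pieces
(possibly empty, so that finite partitions are included). -/
def IsRLPartition {Ω : Type*} [MeasurableSpace Ω] (A : Set Ω) (P : ℕ → Set Ω) : Prop :=
  (∀ i, MeasurableSet (P i)) ∧ Pairwise (Function.onFun Disjoint P) ∧ (⋃ i, P i) = A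

/-- `Γ` is finer than (inscribed into) `P`: every piece of `Γ` is contained in a piece of `P`. -/
def IsFinerPartition {Ω : Type*} (Γ P : ℕ → Set Ω) : Prop :=
  ∀ j, ∃ i, Γ j ⊆ P i

/-- `T` is a choice of sampling points for the partition `P`. -/
def IsSampling {Ω : Type*} (P : ℕ → Set Ω) (T : ℕ → Ω) : Prop :=
  ∀ i, (P i).Nonempty → T i ∈ P i

/-- The RL integral sum `S(f, P, T) = ∑ᵢ μ(Pᵢ) • f(Tᵢ)`. -/
noncomputable def RLSum {Ω X : Type*} [MeasurableSpace Ω] [NormedAddCommGroup X]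
    [NormedSpace ℝ X] (μ : Measure Ω) (f : Ω → X) (P : ℕ → Set Ω) (T : ℕ → Ω) : X :=
  ∑' i, (μ (P i)).toReal • f (T i)

/-- Absolute convergence of the RL integral sum. -/
def RLSumAbsConv {Ω X : Type*} [MeasurableSpace Ω] [NormedAddCommGroup X]
    (μ : Measure Ω) (f : Ω → X) (P : ℕ → Set Ω) (T : ℕ → Ω) : Prop :=
  Summable fun i => (μ (P i)).toReal * ‖f (T i)‖

/-- `f` is RL-integrable over `A` with RL integral `x`. -/
def HasRLIntegral {Ω X : Type*} [MeasurableSpace Ω] [NormedAddCommGroup X] [NormedSpace ℝ X]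
    (μ : Measure Ω) (f : Ω → X) (A : Set Ω) (x : X) : Prop :=
  ∀ ε > 0, ∃ P : ℕ → Set Ω, IsRLPartition A P ∧
    ∀ Γ : ℕ → Set Ω, IsRLPartition A Γ → IsFinerPartition Γ P →
      ∀ T : ℕ → Ω, IsSampling Γ T →
        RLSumAbsConv μ f Γ T ∧ ‖RLSum μ f Γ T - x‖ < ε

/-- `f` has a Lebesgue-integrable majorant, i.e. `f ∈ L̄₁(Ω, Σ, μ, X)`. -/
def HasIntegrableMajorant {Ω X : Type*} [MeasurableSpace Ω] [NormedAddCommGroup X]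
    (μ : Measure Ω) (f : Ω → X) : Prop :=
  ∃ g : Ω → ℝ, Integrable g μ ∧ ∀ t, ‖f t‖ ≤ g t

/-- The limit set `I(f)`: all limit points of the net of absolute RL integral sums. -/
def RLLimitSet {Ω X : Type*} [MeasurableSpace Ω] [NormedAddCommGroup X] [NormedSpace ℝ X]
    (μ : Measure Ω) (f : Ω → X) : Set X :=
  {x | ∀ ε > 0, ∀ P : ℕ → Set Ω, IsRLPartition Set.univ P →
    ∃ Γ : ℕ → Set Ω, IsRLPartition Set.univ Γ ∧ IsFinerPartition Γ P ∧
      ∃ T : ℕ → Ω, IsSampling Γ T ∧ RLSumAbsConv μ f Γ T ∧ ‖RLSum μ f Γ T - x‖ < ε}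

/-- `g` is a Bochner-integrable equivalent of `f`: `g` is Bochner integrable and the
RL integral of `f` over every measurable set equals the Bochner integral of `g` over it. -/
def BochnerEquivalent {Ω X : Type*} [MeasurableSpace Ω] [NormedAddCommGroup X] [NormedSpace ℝ X]
    (μ : Measure Ω) (f g : Ω → X) : Prop :=
  Integrable g μ ∧ ∀ A : Set Ω, MeasurableSet A → HasRLIntegral μ f A (∫ ω in A, g ω ∂μ)

/-- `f : [0,1] → X` is Riemann integrable with Riemann integral `x`. -/
def HasRiemannIntegral {X : Type*} [NormedAddCommGroup X] [NormedSpace ℝ X]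
    (f : ℝ → X) (x : X) : Prop :=
  ∀ ε > 0, ∃ δ > 0, ∀ (n : ℕ) (a : ℕ → ℝ) (t : ℕ → ℝ),
    a 0 = 0 → a n = 1 → (∀ i < n, a i ≤ a (i + 1)) →
    (∀ i < n, a (i + 1) - a i < δ) →
    (∀ i < n, t i ∈ Set.Icc (a i) (a (i + 1))) →
    ‖(∑ i ∈ Finset.range n, (a (i + 1) - a i) • f (t i)) - x‖ < ε

/-- If `f ∈ L̄₁(Ω, Σ, μ, X)`, then there is a partition `P` of `Ω` such that for
every finer partition `Γ ≻ P` and every choice of sampling points `T`, the RL integral sum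
`S(f, Γ, T)` converges absolutely. -/
theorem exists_partition_absolutely_convergent
    {Ω X : Type*} [MeasurableSpace Ω] [NormedAddCommGroup X] [NormedSpace ℝ X] [CompleteSpace X]
    (μ : Measure Ω) [IsFiniteMeasure μ] (f : Ω → X) (hf : HasIntegrableMajorant μ f) :
    ∃ P : ℕ → Set Ω, IsRLPartition Set.univ P ∧
      ∀ Γ : ℕ → Set Ω, IsRLPartition Set.univ Γ → IsFinerPartition Γ P →
        ∀ T : ℕ → Ω, IsSampling Γ T → RLSumAbsConv μ f Γ T := by
  obtain ⟨g, hg, hmaj⟩ := hf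
  obtain ⟨g', hg'sm, hgg'⟩ := hg.aestronglyMeasurable
  have hg'meas : Measurable g' := hg'sm.measurable
  set N : Set Ω := toMeasurable μ {ω | g ω ≠ g' ω} with hN
  have hNmeas : MeasurableSet N := measurableSet_toMeasurable _ _
  have hNnull : μ N = 0 := by
    rw [hN, measure_toMeasurable]
    exact hgg'
  have hNout : ∀ ω ∉ N, g ω = g' ω := by
    intro ω hω
    by_contra h
    exact hω (subset_toMeasurable _ _ h)
  -- the partition
  set P : ℕ → Set Ω := fun n =>
    Nat.rec N (fun m _ => {ω | ω ∉ N ∧ (m : ℝ) ≤ g' ω ∧ g' ω < m + 1}) n with hP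
  have hP0 : P 0 = N := rfl
  have hPs : ∀ m : ℕ, P (m + 1) = {ω | ω ∉ N ∧ (m : ℝ) ≤ g' ω ∧ g' ω < m + 1} :=
    fun m => rfl
  have hg'int : Integrable g' μ := hg.congr hgg'
  have hfnn : ∀ ω, (0 : ℝ) ≤ g ω := fun ω => (norm_nonneg _).trans (hmaj ω)
  have hPpart : IsRLPartition Set.univ P := by
    refine ⟨?_, ?_, ?_⟩
    · intro i
      rcases i with _ | m
      · exact hNmeas
      · rw [hPs]
        exact (hNmeas.compl.inter ((measurableSet_le measurable_const hg'meas).inter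
          (measurableSet_lt hg'meas measurable_const)))
    · intro i j hij
      rw [Function.onFun, Set.disjoint_left]
      intro ω hωi hωj
      rcases i with _ | m <;> rcases j with _ | n
      · exact hij rfl
      · rw [hPs] at hωj
        exact hωj.1 hωi
      · rw [hPs] at hωi
        exact hωi.1 hωj
      · rw [hPs] at hωi hωj
        rcases lt_or_gt_of_ne (fun h : m = n => hij (by rw [h])) with h | h
        · have : (m : ℝ) + 1 ≤ n := by exact_mod_cast h
          linarith [hωi.2.2, hωj.2.1]
        · have : (n : ℝ) + 1 ≤ m := by exact_mod_cast h
          linarith [hωj.2.2, hωi.2.1]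
    · apply Set.eq_univ_of_forall
      intro ω
      by_cases hω : ω ∈ N
      · exact Set.mem_iUnion.2 ⟨0, hω⟩
      · have hge : (0 : ℝ) ≤ g' ω := (hNout ω hω) ▸ hfnn ω
        refine Set.mem_iUnion.2 ⟨⌊g' ω⌋₊ + 1, ?_⟩
        rw [hPs]
        exact ⟨hω, Nat.floor_le hge, Nat.lt_floor_add_one _⟩
  refine ⟨P, hPpart, ?_⟩
  intro Γ hΓ hfine T hT
  -- the dominating ENNReal function
  set H : Ω → ENNReal := fun ω => ENNReal.ofReal (g' ω) + 1 with hH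
  have htot : ∫⁻ ω, H ω ∂μ ≠ ⊤ := by
    rw [hH]
    simp only [lintegral_add_right _ measurable_const, lintegral_const, one_mul]
    exact ENNReal.add_ne_top.2 ⟨hg'int.lintegral_lt_top.ne, (measure_ne_top μ _)⟩
  have hsum : ∑' j, ∫⁻ ω in Γ j, H ω ∂μ = ∫⁻ ω, H ω ∂μ := by
    rw [← lintegral_iUnion hΓ.1 hΓ.2.1, hΓ.2.2, Measure.restrict_univ]
  have hfin : ∀ j, ∫⁻ ω in Γ j, H ω ∂μ ≠ ⊤ := by
    intro j
    refine ne_top_of_le_ne_top htot ?_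
    exact setLIntegral_le_lintegral _ _
  have hbsum : Summable fun j => (∫⁻ ω in Γ j, H ω ∂μ).toReal := by
    apply ENNReal.summable_toReal
    rw [hsum]; exact htot
  apply Summable.of_nonneg_of_le
    (fun j => mul_nonneg ENNReal.toReal_nonneg (norm_nonneg _)) _ hbsum
  intro j
  rcases Set.eq_empty_or_nonempty (Γ j) with hΓj | hΓj
  · simp [hΓj]
  have hTj : T j ∈ Γ j := hT j hΓj
  obtain ⟨i, hsub⟩ := hfine j
  rcases i with _ | n
  · have : μ (Γ j) = 0 := measure_mono_null (hP0 ▸ hsub) hNnull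
    simp [this]
  · rw [hPs] at hsub
    have hTjP := hsub hTj
    have hfb : ‖f (T j)‖ ≤ (n : ℝ) + 1 := by
      have := hmaj (T j)
      rw [hNout _ hTjP.1] at this
      linarith [hTjP.2.2]
    have hHlb : ∀ ω ∈ Γ j, ((n : ENNReal) + 1) ≤ H ω := by
      intro ω hω
      have hω' := hsub hω
      rw [hH]
      have : (n : ENNReal) ≤ ENNReal.ofReal (g' ω) := by
        rw [← ENNReal.ofReal_natCast]
        exact ENNReal.ofReal_le_ofReal hω'.2.1
      exact add_le_add this le_rfl
    have hlint : ((n : ENNReal) + 1) * μ (Γ j) ≤ ∫⁻ ω in Γ j, H ω ∂μ := by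
      rw [← setLIntegral_const (Γ j) ((n : ENNReal) + 1)]
      exact setLIntegral_mono_ae (Measurable.aemeasurable (by fun_prop))
        (Filter.Eventually.of_forall fun ω h => hHlb ω h)
    calc (μ (Γ j)).toReal * ‖f (T j)‖
        ≤ (μ (Γ j)).toReal * ((n : ℝ) + 1) :=
          mul_le_mul_of_nonneg_left hfb ENNReal.toReal_nonneg
      _ = (((n : ENNReal) + 1) * μ (Γ j)).toReal := by
          rw [ENNReal.toReal_mul, mul_comm, ENNReal.toReal_add (by simp) (by simp),
            ENNReal.toReal_natCast, ENNReal.toReal_one]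
      _ ≤ (∫⁻ ω in Γ j, H ω ∂μ).toReal :=
          ENNReal.toReal_mono (hfin j) hlint
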